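/- As t → T, the mean curvature flow F(x,y;t) = (√2 cos β(t) x, √2 sin β(t) y) with cos 2β(t) = cos 2β(0) e^{4(l-m-1)t} converges pointwise to (√2 x, 0), i.e., F(M_+, t) converges to the round sphere S^{l-1}(1) = {(x,0) ∈ ℝ^{2l} : |x| = 1}; and as t → -∞, F(x,y;t) converges to (x,y) ∈ M_+. -/

import Mathlib

open Real Matrix Filter

/-- as `t → T⁻`, the mean curvature flow
`F(x,y;t) = (√2 cos β(t) x, √2 sin β(t) y)`, with
`cos 2β(t) = cos 2β(0) e^{4(l-m-1)t}`, converges to `(√2 x, 0)` — a point of the round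
sphere `S^{l-1}(1) = {(x,0) : |x| = 1}`, since `|√2 x| = 1` — and as `t → -∞` it
converges to `(x, y) ∈ M₊`. -/
theorem statement15 (l m : ℕ) (hl : m + 2 ≤ l)
    (x y : Fin l → ℝ)
    (hx : x ⬝ᵥ x = 1 / 2) (hy : y ⬝ᵥ y = 1 / 2) (hxy : x ⬝ᵥ y = 0)
    (β : ℝ → ℝ) (T : ℝ)
    (hβ0 : β 0 ∈ Set.Ioo 0 (π / 4))
    (hrange : ∀ t < T, β t ∈ Set.Ioo 0 (π / 4))
    (hdef : ∀ t < T, Real.cos (2 * β t) =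
      Real.cos (2 * β 0) * Real.exp (4 * ((l : ℝ) - m - 1) * t))
    (hT : Real.cos (2 * β 0) * Real.exp (4 * ((l : ℝ) - m - 1) * T) = 1) :
    let F : ℝ → (Fin l ⊕ Fin l → ℝ) := fun t =>
      Sum.elim (fun j => Real.sqrt 2 * Real.cos (β t) * x j)
        (fun j => Real.sqrt 2 * Real.sin (β t) * y j)
    Filter.Tendsto F (nhdsWithin T (Set.Iio T))
        (nhds (Sum.elim (fun j => Real.sqrt 2 * x j) (fun _ => 0))) ∧
      ((fun j => Real.sqrt 2 * x j) ⬝ᵥ (fun j => Real.sqrt 2 * x j) = 1) ∧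
      Filter.Tendsto F Filter.atBot (nhds (Sum.elim x y)) := by
  intro F
  set k : ℝ := (l : ℝ) - m - 1 with hk
  have hkpos : (0 : ℝ) < k := by
    have : (m + 2 : ℝ) ≤ (l : ℝ) := by exact_mod_cast hl
    simp only [hk]; linarith
  set g : ℝ → ℝ := fun t => Real.arccos (Real.cos (2 * β 0) * Real.exp (4 * k * t)) / 2
    with hg
  have hβeq : ∀ t < T, β t = g t := by
    intro t ht
    have h1 := (hrange t ht).1
    have h2 := (hrange t ht).2
    have hpi : 2 * β t ≤ π := by nlinarith [Real.pi_pos]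
    have := hdef t ht
    simp only [hg, ← this]
    rw [Real.arccos_cos (by linarith) hpi]
    ring
  have hgcont : Continuous g := by
    exact (Real.continuous_arccos.comp (by fun_prop)).div_const 2
  -- limit as t → T⁻
  have hgT : g T = 0 := by
    simp only [hg, hT, Real.arccos_one]
    ring
  have hβT : Filter.Tendsto β (nhdsWithin T (Set.Iio T)) (nhds 0) := by
    have : Filter.Tendsto g (nhdsWithin T (Set.Iio T)) (nhds 0) := by
      rw [← hgT]
      exact (hgcont.tendsto T).mono_left nhdsWithin_le_nhds
    refine this.congr' ?_
    filter_upwards [self_mem_nhdsWithin] with t ht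
    exact (hβeq t ht).symm
  -- limit as t → -∞
  have hβbot : Filter.Tendsto β Filter.atBot (nhds (π / 4)) := by
    have hexp : Filter.Tendsto (fun t => Real.cos (2 * β 0) * Real.exp (4 * k * t))
        Filter.atBot (nhds 0) := by
      have h1 : Filter.Tendsto (fun t : ℝ => 4 * k * t) Filter.atBot Filter.atBot :=
        Filter.Tendsto.const_mul_atBot (by linarith) Filter.tendsto_id
      have h2 := Real.tendsto_exp_atBot.comp h1
      have := h2.const_mul (Real.cos (2 * β 0))
      simpa using this
    have hgbot : Filter.Tendsto g Filter.atBot (nhds (π / 4)) := by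
      have := (Real.continuous_arccos.tendsto 0).comp hexp
      rw [Real.arccos_zero] at this
      have := this.div_const 2
      have h4 : π / 2 / 2 = π / 4 := by ring
      simpa [hg, Function.comp, h4] using this
    refine hgbot.congr' ?_
    filter_upwards [Filter.Iio_mem_atBot T] with t ht
    exact (hβeq t ht).symm
  have hs2 : Real.sqrt 2 * Real.sqrt 2 = 2 := Real.mul_self_sqrt (by norm_num)
  refine ⟨?_, ?_, ?_⟩
  · rw [tendsto_pi_nhds]
    rintro (j | j)
    · simpa [F] using
        ((((Real.continuous_cos.tendsto 0).comp hβT).const_mul (Real.sqrt 2)).mul_const (x j))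
    · have := (((Real.continuous_sin.tendsto 0).comp hβT).const_mul (Real.sqrt 2)).mul_const (y j)
      simpa [F] using this
  · have : (fun j => Real.sqrt 2 * x j) ⬝ᵥ (fun j => Real.sqrt 2 * x j)
        = (Real.sqrt 2 * Real.sqrt 2) * (x ⬝ᵥ x) := by
      simp only [dotProduct, Finset.mul_sum]
      exact Finset.sum_congr rfl fun i _ => by ring
    rw [this, hs2, hx]; norm_num
  · rw [tendsto_pi_nhds]
    rintro (j | j)
    · have h := (((Real.continuous_cos.tendsto (π/4)).comp hβbot).const_mul
        (Real.sqrt 2)).mul_const (x j)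
      have hv : Real.sqrt 2 * (Real.sqrt 2 / 2) * x j = x j := by
        rw [show Real.sqrt 2 * (Real.sqrt 2 / 2) = (Real.sqrt 2 * Real.sqrt 2) / 2 by ring,
          hs2]; ring
      simpa [F, hv] using h
    · have h := (((Real.continuous_sin.tendsto (π/4)).comp hβbot).const_mul
        (Real.sqrt 2)).mul_const (y j)
      have hv : Real.sqrt 2 * (Real.sqrt 2 / 2) * y j = y j := by
        rw [show Real.sqrt 2 * (Real.sqrt 2 / 2) = (Real.sqrt 2 * Real.sqrt 2) / 2 by ring,
          hs2]; ring
      simpa [F, hv] using h
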